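/- Let λ > 0 and let Λ, Λ' be d×d symmetric positive definite matrices with Λ ⪰ λI and Λ' ⪰ λI. Then the operator norm of the difference of their positive square roots satisfies ||Λ^{1/2} - (Λ')^{1/2}||_2 ≤ (1/(2√λ)) ||Λ - Λ'||_2. -/

import Mathlib

open Matrix
open scoped MatrixOrder
open scoped RealInnerProductSpace

namespace SqrtDiffAux

variable {d : ℕ}

lemma norm_sq_eq (x : EuclideanSpace ℝ (Fin d)) : ‖x‖ ^ 2 = ∑ i, (x i) ^ 2 := by
  rw [EuclideanSpace.norm_eq, Real.sq_sqrt (by positivity)]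
  simp [sq_abs]

lemma clm_apply_basis (M : Matrix (Fin d) (Fin d) ℝ) (hM : M.IsHermitian) (j : Fin d) :
    toEuclideanCLM (𝕜 := ℝ) M (hM.eigenvectorBasis j) =
      hM.eigenvalues j • hM.eigenvectorBasis j := by
  ext i
  simpa using congrFun (hM.mulVec_eigenvectorBasis j) i

lemma selfAdjoint_clm {M : Matrix (Fin d) (Fin d) ℝ} (hM : M.IsHermitian) :
    _root_.IsSelfAdjoint (toEuclideanCLM (𝕜 := ℝ) M) := by
  rw [_root_.IsSelfAdjoint, ← map_star]
  congr 1

lemma repr_clm (M : Matrix (Fin d) (Fin d) ℝ) (hM : M.IsHermitian)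
    (x : EuclideanSpace ℝ (Fin d)) (i : Fin d) :
    hM.eigenvectorBasis.repr (toEuclideanCLM (𝕜 := ℝ) M x) i =
      hM.eigenvalues i * hM.eigenvectorBasis.repr x i := by
  rw [OrthonormalBasis.repr_apply_apply, OrthonormalBasis.repr_apply_apply]
  have h1 := (selfAdjoint_clm hM).isSymmetric (hM.eigenvectorBasis i) x
  simp only [ContinuousLinearMap.coe_coe] at h1
  rw [← h1, clm_apply_basis M hM i, inner_smul_left]
  simp

lemma norm_clm_le {M : Matrix (Fin d) (Fin d) ℝ} (hM : M.IsHermitian) (c : ℝ) (hc : 0 ≤ c)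
    (h : ∀ i, |hM.eigenvalues i| ≤ c) : ‖toEuclideanCLM (𝕜 := ℝ) M‖ ≤ c := by
  refine ContinuousLinearMap.opNorm_le_bound _ hc fun x => ?_
  set b := hM.eigenvectorBasis with hb
  set T := toEuclideanCLM (𝕜 := ℝ) M with hT
  have key : ∀ i, b.repr (T x) i = hM.eigenvalues i * b.repr x i := fun i => repr_clm M hM x i
  have h1 : ‖T x‖ ^ 2 ≤ (c * ‖x‖) ^ 2 := by
    rw [← b.repr.norm_map (T x), ← b.repr.norm_map x, norm_sq_eq, mul_pow, norm_sq_eq,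
      Finset.mul_sum]
    refine Finset.sum_le_sum fun i _ => ?_
    rw [key i, mul_pow]
    have h2 : (hM.eigenvalues i) ^ 2 ≤ c ^ 2 := by
      rw [← sq_abs]
      exact pow_le_pow_left₀ (abs_nonneg _) (h i) 2
    exact mul_le_mul_of_nonneg_right h2 (sq_nonneg _)
  calc ‖T x‖ = Real.sqrt (‖T x‖ ^ 2) := by rw [Real.sqrt_sq (norm_nonneg _)]
    _ ≤ Real.sqrt ((c * ‖x‖) ^ 2) := Real.sqrt_le_sqrt h1
    _ = c * ‖x‖ := Real.sqrt_sq (by positivity)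

lemma inner_clm_ge {M : Matrix (Fin d) (Fin d) ℝ} (hM : M.PosSemidef) (c : ℝ)
    (h : (M * M - c • (1 : Matrix (Fin d) (Fin d) ℝ)).PosSemidef) (x : EuclideanSpace ℝ (Fin d)) :
    Real.sqrt c * ‖x‖ ^ 2 ≤ ⟪x, toEuclideanCLM (𝕜 := ℝ) M x⟫ := by
  set b := hM.1.eigenvectorBasis with hb
  have hdot : ∀ i, (⇑(b i) : Fin d → ℝ) ⬝ᵥ ⇑(b i) = 1 := by
    intro i
    have h1 : ⟪b i, b i⟫ = 1 := real_inner_self_eq_norm_sq (b i) ▸ by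
      rw [b.orthonormal.1 i]; norm_num
    rw [← h1]
    simp only [dotProduct, PiLp.inner_apply, RCLike.inner_apply, conj_trivial]
  have heig : ∀ i, Real.sqrt c ≤ hM.1.eigenvalues i := by
    intro i
    have h0 := hM.eigenvalues_nonneg i
    have hq := h.re_dotProduct_nonneg ⇑(b i)
    rw [sub_mulVec, ← mulVec_mulVec, hM.1.mulVec_eigenvectorBasis, mulVec_smul,
      hM.1.mulVec_eigenvectorBasis, smul_smul, smul_mulVec, one_mulVec,
      dotProduct_sub, dotProduct_smul, dotProduct_smul] at hq
    simp only [← hb, star_trivial, smul_eq_mul, hdot i, mul_one, RCLike.re_to_real] at hq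
    have hsq : c ≤ (hM.1.eigenvalues i) ^ 2 := by nlinarith
    calc Real.sqrt c ≤ Real.sqrt ((hM.1.eigenvalues i) ^ 2) := Real.sqrt_le_sqrt hsq
      _ = |hM.1.eigenvalues i| := Real.sqrt_sq_eq_abs _
      _ = hM.1.eigenvalues i := abs_of_nonneg h0
  set T := toEuclideanCLM (𝕜 := ℝ) M with hT
  have key : ∀ i, b.repr (T x) i = hM.1.eigenvalues i * b.repr x i :=
    fun i => repr_clm M hM.1 x i
  have hexp : ⟪x, T x⟫ = ∑ i, hM.1.eigenvalues i * (b.repr x i) ^ 2 := by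
    rw [← b.repr.inner_map_map x (T x)]
    simp only [PiLp.inner_apply, RCLike.inner_apply, starRingEnd_apply, star_trivial]
    refine Finset.sum_congr rfl fun i _ => ?_
    rw [key i]; ring
  rw [hexp, ← b.repr.norm_map x, norm_sq_eq, Finset.mul_sum]
  refine Finset.sum_le_sum fun i _ => ?_
  exact mul_le_mul_of_nonneg_right (heig i) (sq_nonneg _)

end SqrtDiffAux

open SqrtDiffAux

theorem sqrt_diff_opNorm_le (d : ℕ) (lam : ℝ) (hlam : 0 < lam)
    (Λ Λ' : Matrix (Fin d) (Fin d) ℝ)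
    (hΛ : Λ.PosDef) (hΛ' : Λ'.PosDef)
    (hΛlam : (Λ - lam • (1 : Matrix (Fin d) (Fin d) ℝ)).PosSemidef)
    (hΛ'lam : (Λ' - lam • (1 : Matrix (Fin d) (Fin d) ℝ)).PosSemidef) :
    ‖Matrix.toEuclideanCLM (𝕜 := ℝ) (CFC.sqrt Λ - CFC.sqrt Λ')‖ ≤
      (1 / (2 * Real.sqrt lam)) * ‖Matrix.toEuclideanCLM (𝕜 := ℝ) (Λ - Λ')‖ := by
  have hsl : 0 < Real.sqrt lam := Real.sqrt_pos.mpr hlam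
  rcases Nat.eq_zero_or_pos d with hd | hd
  · subst hd
    have : (toEuclideanCLM (𝕜 := ℝ) (CFC.sqrt Λ - CFC.sqrt Λ')) = 0 :=
      ContinuousLinearMap.ext fun x => Subsingleton.elim _ _
    rw [this, norm_zero]
    positivity
  haveI : Nonempty (Fin d) := ⟨⟨0, hd⟩⟩
  set hA : (CFC.sqrt Λ).PosSemidef := Matrix.nonneg_iff_posSemidef.mp (CFC.sqrt_nonneg Λ) with hhA
  set hB : (CFC.sqrt Λ').PosSemidef := Matrix.nonneg_iff_posSemidef.mp (CFC.sqrt_nonneg Λ') with hhB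
  set A := CFC.sqrt Λ with hAd
  set B := CFC.sqrt Λ' with hBd
  have hD : (A - B).IsHermitian := hA.1.sub hB.1
  -- pick the eigenvalue of maximal absolute value
  obtain ⟨j, -, hj⟩ := Finset.exists_max_image Finset.univ (fun i => |hD.eigenvalues i|)
    ⟨Classical.arbitrary (Fin d), Finset.mem_univ _⟩
  set μ := hD.eigenvalues j with hμ
  set v := hD.eigenvectorBasis j with hv
  have hvnorm : ‖v‖ = 1 := hD.eigenvectorBasis.orthonormal.1 j
  have hnorm_le : ‖toEuclideanCLM (𝕜 := ℝ) (A - B)‖ ≤ |μ| :=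
    norm_clm_le hD |μ| (abs_nonneg _) (fun i => hj i (Finset.mem_univ i))
  -- quadratic form lower bounds for A and B
  have hAq : Real.sqrt lam * ‖v‖ ^ 2 ≤ ⟪v, toEuclideanCLM (𝕜 := ℝ) A v⟫ := by
    refine inner_clm_ge hA lam ?_ v
    rwa [CFC.sqrt_mul_sqrt_self Λ (Matrix.nonneg_iff_posSemidef.mpr hΛ.posSemidef)]
  have hBq : Real.sqrt lam * ‖v‖ ^ 2 ≤ ⟪v, toEuclideanCLM (𝕜 := ℝ) B v⟫ := by
    refine inner_clm_ge hB lam ?_ v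
    rwa [CFC.sqrt_mul_sqrt_self Λ' (Matrix.nonneg_iff_posSemidef.mpr hΛ'.posSemidef)]
  -- the algebraic identity
  have hid : A * (A - B) + (A - B) * B = Λ - Λ' := by
    rw [mul_sub, sub_mul, CFC.sqrt_mul_sqrt_self Λ (Matrix.nonneg_iff_posSemidef.mpr hΛ.posSemidef), CFC.sqrt_mul_sqrt_self Λ' (Matrix.nonneg_iff_posSemidef.mpr hΛ'.posSemidef)]
    abel
  have hDv : toEuclideanCLM (𝕜 := ℝ) (A - B) v = μ • v := clm_apply_basis _ hD j
  set s : ℝ := ⟪v, toEuclideanCLM (𝕜 := ℝ) A v⟫ + ⟪v, toEuclideanCLM (𝕜 := ℝ) B v⟫ with hs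
  have hinner : ⟪v, toEuclideanCLM (𝕜 := ℝ) (Λ - Λ') v⟫ = μ * s := by
    have hsymm := (selfAdjoint_clm hD).isSymmetric v (toEuclideanCLM (𝕜 := ℝ) B v)
    simp only [ContinuousLinearMap.coe_coe] at hsymm
    rw [← hid, map_add, _root_.map_mul, _root_.map_mul, ContinuousLinearMap.add_apply,
      inner_add_right, ContinuousLinearMap.mul_apply, ContinuousLinearMap.mul_apply, hDv,
      ContinuousLinearMap.map_smul, inner_smul_right, ← hsymm, hDv, inner_smul_left]
    simp only [starRingEnd_apply, star_trivial, hs]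
    ring
  have hslam : 2 * Real.sqrt lam ≤ s := by
    rw [hs]
    have := add_le_add hAq hBq
    rw [hvnorm] at this
    nlinarith
  have hbound : |μ| * (2 * Real.sqrt lam) ≤ ‖toEuclideanCLM (𝕜 := ℝ) (Λ - Λ')‖ := by
    calc |μ| * (2 * Real.sqrt lam) ≤ |μ| * s :=
          mul_le_mul_of_nonneg_left hslam (abs_nonneg _)
      _ = |μ * s| := by
          rw [abs_mul, abs_of_nonneg (le_trans (by positivity) hslam)]
      _ = |⟪v, toEuclideanCLM (𝕜 := ℝ) (Λ - Λ') v⟫| := by rw [hinner]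
      _ ≤ ‖v‖ * ‖toEuclideanCLM (𝕜 := ℝ) (Λ - Λ') v‖ := abs_real_inner_le_norm _ _
      _ ≤ ‖v‖ * (‖toEuclideanCLM (𝕜 := ℝ) (Λ - Λ')‖ * ‖v‖) := by
          exact mul_le_mul_of_nonneg_left (ContinuousLinearMap.le_opNorm _ _) (norm_nonneg _)
      _ = ‖toEuclideanCLM (𝕜 := ℝ) (Λ - Λ')‖ := by rw [hvnorm]; ring
  calc ‖toEuclideanCLM (𝕜 := ℝ) (A - B)‖ ≤ |μ| := hnorm_le
    _ ≤ (1 / (2 * Real.sqrt lam)) * ‖toEuclideanCLM (𝕜 := ℝ) (Λ - Λ')‖ := by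
        rw [one_div, inv_mul_eq_div, le_div_iff₀ (by positivity)]
        exact hbound
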